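/- Let G = Z^n ⋊_φ Z and u = w t^s, v = x t^s in normal form with s ≠ 0. Then u and v are conjugate in G if and only if there exist e ∈ {0, 1, ..., |s|−1} and b ∈ Z^n such that x − φ^e(w) = (Id_n − φ^s)(b); moreover in that case b t^e conjugates u to v. -/

import Mathlib

open Matrix

def mAut {n : ℕ} (M : (Matrix (Fin n) (Fin n) ℤ)ˣ) : (Fin n → ℤ) ≃+ (Fin n → ℤ) where
  toFun v := (M : Matrix (Fin n) (Fin n) ℤ) *ᵥ v
  invFun v := (↑M⁻¹ : Matrix (Fin n) (Fin n) ℤ) *ᵥ v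
  left_inv v := by simp [Matrix.mulVec_mulVec]
  right_inv v := by simp [Matrix.mulVec_mulVec]
  map_add' u v := by simp [Matrix.mulVec_add]

def tAct {n : ℕ} (M : (Matrix (Fin n) (Fin n) ℤ)ˣ) :
    Multiplicative ℤ →* MulAut (Multiplicative (Fin n → ℤ)) :=
  zpowersHom _ (AddEquiv.toMultiplicative (mAut M))

abbrev G (n : ℕ) (M : (Matrix (Fin n) (Fin n) ℤ)ˣ) :=
  SemidirectProduct (Multiplicative (Fin n → ℤ)) (Multiplicative ℤ) (tAct M)

def nf {n : ℕ} (M : (Matrix (Fin n) (Fin n) ℤ)ˣ) (w : Fin n → ℤ) (k : ℤ) : G n M :=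
  SemidirectProduct.inl (Multiplicative.ofAdd w) * SemidirectProduct.inr (Multiplicative.ofAdd k)

-- aux
lemma pow_toMult {A : Type*} [AddGroup A] (f : AddAut A) (k : ℤ) (v : A) :
    ((AddEquiv.toMultiplicative f) ^ k : MulAut (Multiplicative A)) (Multiplicative.ofAdd v)
      = Multiplicative.ofAdd ((k • f) v) := by
  induction k using Int.induction_on generalizing v with
  | zero => simp
  | succ m ih =>
    rw [_root_.zpow_add_one, add_one_zsmul, MulAut.mul_apply, AddAut.add_apply]
    have h1 : (AddEquiv.toMultiplicative f) (Multiplicative.ofAdd v)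
        = Multiplicative.ofAdd (f v) := rfl
    rw [h1, ih]
  | pred m ih =>
    rw [_root_.zpow_sub_one, sub_one_zsmul, MulAut.mul_apply, AddAut.add_apply]
    have h1 : (AddEquiv.toMultiplicative f)⁻¹ (Multiplicative.ofAdd v)
        = Multiplicative.ofAdd ((-f) v) := rfl
    rw [h1, ih]

def mAutHom {n : ℕ} : Additive (Matrix (Fin n) (Fin n) ℤ)ˣ →+ AddAut (Fin n → ℤ) where
  toFun A := mAut (Additive.toMul A)
  map_zero' := by ext v; simp [mAut]
  map_add' A B := by
    apply AddEquiv.ext; intro v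
    show ((Additive.toMul A * Additive.toMul B : _ˣ) : Matrix (Fin n) (Fin n) ℤ) *ᵥ v
        = ((Additive.toMul A : _ˣ) : Matrix (Fin n) (Fin n) ℤ) *ᵥ (((Additive.toMul B : _ˣ) : Matrix (Fin n) (Fin n) ℤ) *ᵥ v)
    rw [Units.val_mul, Matrix.mulVec_mulVec]

lemma mAut_zpow {n : ℕ} (M : (Matrix (Fin n) (Fin n) ℤ)ˣ) (k : ℤ) (v : Fin n → ℤ) :
    (k • (mAut M : AddAut (Fin n → ℤ))) v = (↑(M ^ k) : Matrix (Fin n) (Fin n) ℤ) *ᵥ v := by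
  have : k • (mAut M : AddAut (Fin n → ℤ)) = mAutHom (Additive.ofMul (M ^ k)) :=
    (map_zsmul mAutHom k (Additive.ofMul M)).symm
  rw [this]; rfl

lemma tAct_apply {n : ℕ} (M : (Matrix (Fin n) (Fin n) ℤ)ˣ) (k : ℤ) (v : Fin n → ℤ) :
    tAct M (Multiplicative.ofAdd k) (Multiplicative.ofAdd v)
      = Multiplicative.ofAdd ((↑(M ^ k) : Matrix (Fin n) (Fin n) ℤ) *ᵥ v) := by
  show ((AddEquiv.toMultiplicative (mAut M)) ^ k) _ = _
  rw [pow_toMult, mAut_zpow]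

open Multiplicative SemidirectProduct in
lemma nf_left {n : ℕ} (M : (Matrix (Fin n) (Fin n) ℤ)ˣ) (a : Fin n → ℤ) (k : ℤ) :
    (nf M a k).left = ofAdd a := by
  simp [nf, SemidirectProduct.mul_left]

open Multiplicative SemidirectProduct in
lemma nf_right {n : ℕ} (M : (Matrix (Fin n) (Fin n) ℤ)ˣ) (a : Fin n → ℤ) (k : ℤ) :
    (nf M a k).right = ofAdd k := by
  simp [nf, SemidirectProduct.mul_right]

open Multiplicative in
lemma eq_nf {n : ℕ} {M : (Matrix (Fin n) (Fin n) ℤ)ˣ} (g : G n M) :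
    g = nf M (toAdd g.left) (toAdd g.right) := by
  conv_lhs => rw [← SemidirectProduct.inl_left_mul_inr_right g]
  rfl

open Multiplicative in
lemma nf_eq_iff {n : ℕ} {M : (Matrix (Fin n) (Fin n) ℤ)ˣ} {a a' : Fin n → ℤ} {k k' : ℤ} :
    nf M a k = nf M a' k' ↔ a = a' ∧ k = k' := by
  constructor
  · intro h
    have h1 := congrArg SemidirectProduct.left h
    have h2 := congrArg SemidirectProduct.right h
    rw [nf_left, nf_left] at h1
    rw [nf_right, nf_right] at h2
    exact ⟨ofAdd.injective h1, ofAdd.injective h2⟩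
  · rintro ⟨rfl, rfl⟩; rfl

open Multiplicative in
lemma nf_mul {n : ℕ} (M : (Matrix (Fin n) (Fin n) ℤ)ˣ) (a b : Fin n → ℤ) (k l : ℤ) :
    nf M a k * nf M b l = nf M (a + (↑(M ^ k) : Matrix (Fin n) (Fin n) ℤ) *ᵥ b) (k + l) := by
  apply SemidirectProduct.ext
  · rw [SemidirectProduct.mul_left, nf_left, nf_left, nf_left, nf_right, tAct_apply]
    rfl
  · rw [SemidirectProduct.mul_right, nf_right, nf_right, nf_right]
    rfl

open Multiplicative in
lemma nf_inv {n : ℕ} (M : (Matrix (Fin n) (Fin n) ℤ)ˣ) (b : Fin n → ℤ) (e : ℤ) :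
    (nf M b e)⁻¹ = nf M ((↑(M ^ (-e)) : Matrix (Fin n) (Fin n) ℤ) *ᵥ (-b)) (-e) := by
  apply SemidirectProduct.ext
  · rw [SemidirectProduct.inv_left, nf_left, nf_left, nf_right]
    have : (ofAdd b)⁻¹ = ofAdd (-b) := rfl
    rw [this]
    have : (ofAdd e)⁻¹ = ofAdd (-e) := rfl
    rw [this, tAct_apply]
  · rw [SemidirectProduct.inv_right, nf_right, nf_right]
    rfl

lemma conj_nf {n : ℕ} (M : (Matrix (Fin n) (Fin n) ℤ)ˣ) (b w : Fin n → ℤ) (e s : ℤ) :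
    nf M b e * nf M w s * (nf M b e)⁻¹
      = nf M (b + (↑(M ^ e) : Matrix (Fin n) (Fin n) ℤ) *ᵥ w
          - (↑(M ^ s) : Matrix (Fin n) (Fin n) ℤ) *ᵥ b) s := by
  rw [nf_inv, nf_mul, nf_mul, Matrix.mulVec_mulVec, ← Units.val_mul, ← _root_.zpow_add]
  rw [nf_eq_iff]
  constructor
  · have : e + s + -e = s := by ring
    rw [this, Matrix.mulVec_neg]
    abel
  · ring

open Multiplicative in
lemma nf_zpow_right {n : ℕ} (M : (Matrix (Fin n) (Fin n) ℤ)ˣ) (w : Fin n → ℤ) (s m : ℤ) :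
    ((nf M w s) ^ m).right = ofAdd (m * s) := by
  have h1 : ((nf M w s) ^ m).right = SemidirectProduct.rightHom ((nf M w s) ^ m) := rfl
  rw [h1, map_zpow]
  have h2 : SemidirectProduct.rightHom (nf M w s) = ofAdd s := nf_right M w s
  rw [h2, ← ofAdd_zsmul, zsmul_eq_mul]; norm_num

/-- For s ≠ 0, u = w t^s and v = x t^s are conjugate in G iff for some 0 ≤ e ≤ |s|-1 and
    b ∈ ℤ^n one has x - φ^e(w) = (Id - φ^s)(b); moreover b t^e then conjugates u to v. -/
theorem conj_iff_linear_system {n : ℕ} (M : (Matrix (Fin n) (Fin n) ℤ)ˣ)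
    (w x : Fin n → ℤ) (s : ℤ) (hs : s ≠ 0) :
    (IsConj (nf M w s) (nf M x s) ↔
      ∃ e : ℤ, 0 ≤ e ∧ e ≤ |s| - 1 ∧ ∃ b : Fin n → ℤ,
        x - (↑(M ^ e) : Matrix (Fin n) (Fin n) ℤ) *ᵥ w
          = b - (↑(M ^ s) : Matrix (Fin n) (Fin n) ℤ) *ᵥ b) ∧
    ∀ e : ℤ, ∀ b : Fin n → ℤ,
      x - (↑(M ^ e) : Matrix (Fin n) (Fin n) ℤ) *ᵥ w
          = b - (↑(M ^ s) : Matrix (Fin n) (Fin n) ℤ) *ᵥ b →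
      nf M b e * nf M w s * (nf M b e)⁻¹ = nf M x s := by
  have key : ∀ e : ℤ, ∀ b : Fin n → ℤ,
      x - (↑(M ^ e) : Matrix (Fin n) (Fin n) ℤ) *ᵥ w
          = b - (↑(M ^ s) : Matrix (Fin n) (Fin n) ℤ) *ᵥ b →
      nf M b e * nf M w s * (nf M b e)⁻¹ = nf M x s := by
    intro e b h
    rw [conj_nf, nf_eq_iff]
    refine ⟨?_, rfl⟩
    have hx := eq_add_of_sub_eq h
    rw [hx]; abel
  refine ⟨⟨?_, ?_⟩, key⟩
  · intro h
    rcases isConj_iff.mp h with ⟨c, hc⟩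
    set k : ℤ := Multiplicative.toAdd c.right with hk
    set e : ℤ := k % |s| with he
    have hspos : 0 < |s| := abs_pos.mpr hs
    have he0 : 0 ≤ e := Int.emod_nonneg k (abs_ne_zero.mpr hs)
    have helt : e < |s| := Int.emod_lt_of_pos k hspos
    have hdvd : s ∣ (e - k) := by
      have : e - k = -(|s| * (k / |s|)) := by
        rw [he, Int.emod_def]; ring
      rw [this]
      exact dvd_neg.mpr (Dvd.dvd.mul_right ((dvd_abs s s).mpr dvd_rfl) _)
    set m : ℤ := (e - k) / s with hm
    have hms : m * s = e - k := by
      rw [hm, Int.ediv_mul_cancel hdvd]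
    set c' : G n M := c * (nf M w s) ^ m with hc'
    have hconj : c' * nf M w s * c'⁻¹ = nf M x s := by
      rw [hc', ← hc]; group
    have hright : Multiplicative.toAdd c'.right = e := by
      rw [hc', SemidirectProduct.mul_right, nf_zpow_right]
      have : Multiplicative.toAdd (c.right * Multiplicative.ofAdd (m * s)) = k + m * s := rfl
      rw [this, hms]; ring
    have hc'nf : c' = nf M (Multiplicative.toAdd c'.left) e := by
      conv_lhs => rw [eq_nf c']
      rw [hright]
    rw [hc'nf, conj_nf, nf_eq_iff] at hconj
    refine ⟨e, he0, by omega, Multiplicative.toAdd c'.left, ?_⟩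
    rw [← hconj.1]; abel
  · rintro ⟨e, _, _, b, hb⟩
    exact isConj_iff.mpr ⟨nf M b e, key e b hb⟩
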